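/- Let T₁ : V_b → V_f and T₂ : V_f → V_b be linear maps between 2N-dimensional real vector spaces such that K_b := T₂T₁ and K_f := T₁T₂ are both invertible and diagonalizable over ℂ with purely imaginary eigenvalues. Define L₁ = |K_f⁻¹|^{1/2} T₁ and L₂ = |K_b⁻¹|^{1/2} T₂, where |M| denotes the functional-calculus absolute value (applying λ ↦ |λ| to the eigenvalues). Then L₁ = T₁ |K_b⁻¹|^{1/2}, L₂ = T₂ |K_f⁻¹|^{1/2}, and consequently L₁L₂ = |K_f⁻¹| K_f and L₂L₁ = |K_b⁻¹| K_b. -/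

import Mathlib

open Matrix Classical

/-- Functional calculus on a diagonalizable complex matrix: pick a diagonalization
`M = U⁻¹ D U` and apply `f` to the diagonal entries (the eigenvalues). If `M` is not
diagonalizable, return `0`. (For diagonalizable `M` the value is independent of the
chosen diagonalization.) -/
noncomputable def matFun {m : Type*} [Fintype m] [DecidableEq m]
    (f : ℂ → ℂ) (M : Matrix m m ℂ) : Matrix m m ℂ :=
  if hd : ∃ p : Matrix m m ℂ × Matrix m m ℂ,
      IsUnit p.1 ∧ p.2.IsDiag ∧ M = p.1⁻¹ * p.2 * p.1 then
    (hd.choose.1)⁻¹ * (Matrix.diagonal fun i => f (hd.choose.2 i i)) * hd.choose.1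
  else 0

open Polynomial

section Aux

variable {n : Type*} [Fintype n] [DecidableEq n]

lemma comm_pow (A X Y : Matrix n n ℂ) (h : A * X = Y * A) (m : ℕ) :
    A * X ^ m = Y ^ m * A := by
  induction m with
  | zero => simp
  | succ m ih =>
      rw [pow_succ, pow_succ, ← mul_assoc, ih, mul_assoc, h, mul_assoc]

lemma comm_aeval (A X Y : Matrix n n ℂ) (h : A * X = Y * A) (P : ℂ[X]) :
    A * aeval X P = aeval Y P * A := by
  induction P using Polynomial.induction_on' with
  | add p q hp hq => simp only [map_add, mul_add, add_mul, hp, hq]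
  | monomial k a =>
      simp only [aeval_monomial, Algebra.algebraMap_eq_smul_one, smul_mul_assoc,
        one_mul, mul_smul_comm, comm_pow A X Y h k]

lemma aeval_diagonal' (d : n → ℂ) (P : ℂ[X]) :
    aeval (Matrix.diagonal d) P = Matrix.diagonal fun i => P.eval (d i) := by
  induction P using Polynomial.induction_on' with
  | add p q hp hq => simp [map_add, hp, hq, diagonal_add]
  | monomial k a =>
      simp [aeval_monomial, algebraMap_eq_diagonal, diagonal_pow,
        diagonal_mul_diagonal, eval_monomial]

/-- every eigenvalue of `U⁻¹ (diagonal d) U` is a diagonal entry -/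
lemma eig_mem_diag {U : Matrix n n ℂ} (hU : IsUnit U) (d : n → ℂ)
    {M : Matrix n n ℂ} (hM : M = U⁻¹ * Matrix.diagonal d * U)
    {μ : ℂ} {v : n → ℂ} (hv : v ≠ 0) (hev : M *ᵥ v = μ • v) :
    ∃ i, d i = μ := by
  have hUd : IsUnit U.det := (isUnit_iff_isUnit_det U).mp hU
  set w := U *ᵥ v with hw
  have hwne : w ≠ 0 := by
    intro h0
    apply hv
    have : U⁻¹ *ᵥ w = v := by
      rw [hw, mulVec_mulVec, nonsing_inv_mul U hUd, one_mulVec]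
    rw [← this, h0, mulVec_zero]
  have hDw : Matrix.diagonal d *ᵥ w = μ • w := by
    have : U *ᵥ (M *ᵥ v) = Matrix.diagonal d *ᵥ w := by
      rw [hM, mulVec_mulVec, mulVec_mulVec, ← mul_assoc, ← mul_assoc,
        mul_nonsing_inv U hUd, one_mul, ← mulVec_mulVec]
    rw [← this, hev, mulVec_smul]
  obtain ⟨i, hi⟩ := Function.ne_iff.mp hwne
  refine ⟨i, ?_⟩
  have := congrFun hDw i
  rw [mulVec_diagonal] at this
  simp only [Pi.smul_apply, smul_eq_mul] at this
  exact mul_right_cancel₀ hi this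

/-- each diagonal entry is an eigenvalue -/
lemma diag_is_eig {U : Matrix n n ℂ} (hU : IsUnit U) (d : n → ℂ)
    {M : Matrix n n ℂ} (hM : M = U⁻¹ * Matrix.diagonal d * U) (i : n) :
    ∃ v : n → ℂ, v ≠ 0 ∧ M *ᵥ v = d i • v := by
  have hUd : IsUnit U.det := (isUnit_iff_isUnit_det U).mp hU
  refine ⟨U⁻¹ *ᵥ Pi.single i 1, ?_, ?_⟩
  · intro h0
    have : U *ᵥ (U⁻¹ *ᵥ Pi.single i 1) = Pi.single i 1 := by
      rw [mulVec_mulVec, mul_nonsing_inv U hUd, one_mulVec]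
    rw [h0, mulVec_zero] at this
    have := congrFun this i
    simp at this
  · have hsingle : (Pi.single i (d i * 1) : n → ℂ) = d i • (Pi.single i 1 : n → ℂ) := by
      ext j
      rcases eq_or_ne j i with rfl | hj
      · simp
      · simp [Pi.single_eq_of_ne hj]
    rw [hM, mulVec_mulVec, mul_assoc (U⁻¹ * Matrix.diagonal d) U U⁻¹,
      mul_nonsing_inv U hUd, mul_one, ← mulVec_mulVec, diagonal_mulVec_single,
      hsingle, mulVec_smul]

lemma matFun_eq_aeval (f : ℂ → ℂ) (M : Matrix n n ℂ)
    (hd : ∃ p : Matrix n n ℂ × Matrix n n ℂ,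
      IsUnit p.1 ∧ p.2.IsDiag ∧ M = p.1⁻¹ * p.2 * p.1)
    (Q : ℂ[X])
    (hQ : ∀ (μ : ℂ) (v : n → ℂ), v ≠ 0 → M *ᵥ v = μ • v → Q.eval μ = f μ) :
    matFun f M = aeval M Q := by
  rw [matFun, dif_pos hd]
  obtain ⟨hU, hD, hM⟩ := hd.choose_spec
  set U := hd.choose.1
  set D := hd.choose.2
  have hUd : IsUnit U.det := (isUnit_iff_isUnit_det U).mp hU
  set d : n → ℂ := fun i => D i i with hdd
  have hDd : D = Matrix.diagonal d := hD.diagonal_diag.symm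
  rw [hDd] at hM
  have hcomm : U * M = Matrix.diagonal d * U := by
    rw [hM, ← mul_assoc, ← mul_assoc, mul_nonsing_inv U hUd, one_mul]
  have h1 : U * aeval M Q = aeval (Matrix.diagonal d) Q * U :=
    comm_aeval U M (Matrix.diagonal d) hcomm Q
  have h2 : aeval M Q = U⁻¹ * aeval (Matrix.diagonal d) Q * U := by
    rw [mul_assoc, ← h1, ← mul_assoc, nonsing_inv_mul U hUd, one_mul]
  have h3 : ∀ i, Q.eval (d i) = f (d i) := by
    intro i
    obtain ⟨v, hv, hev⟩ := diag_is_eig hU d hM i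
    exact hQ (d i) v hv hev
  have hfd : (fun i => f (D i i)) = fun i => Q.eval (d i) := funext fun i => (h3 i).symm
  rw [h2, aeval_diagonal', hfd]

end Aux

/-- For `K_b = T₂T₁`, `K_f = T₁T₂` invertible and diagonalizable over `ℂ`
with purely imaginary eigenvalues, the normalized identification maps
`L₁ = |K_f⁻¹|^{1/2} T₁` and `L₂ = |K_b⁻¹|^{1/2} T₂` satisfy
`L₁ = T₁ |K_b⁻¹|^{1/2}`, `L₂ = T₂ |K_f⁻¹|^{1/2}`, and hence
`L₁L₂ = |K_f⁻¹| K_f` and `L₂L₁ = |K_b⁻¹| K_b`. -/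
theorem stmt4 (N : ℕ) (T₁ T₂ : Matrix (Fin (2 * N)) (Fin (2 * N)) ℝ)
    (hKbinv : IsUnit (T₂ * T₁)) (hKfinv : IsUnit (T₁ * T₂))
    (hdb : ∃ p : Matrix (Fin (2 * N)) (Fin (2 * N)) ℂ × Matrix (Fin (2 * N)) (Fin (2 * N)) ℂ,
      IsUnit p.1 ∧ p.2.IsDiag ∧ (T₂ * T₁).map Complex.ofReal = p.1⁻¹ * p.2 * p.1)
    (hdf : ∃ p : Matrix (Fin (2 * N)) (Fin (2 * N)) ℂ × Matrix (Fin (2 * N)) (Fin (2 * N)) ℂ,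
      IsUnit p.1 ∧ p.2.IsDiag ∧ (T₁ * T₂).map Complex.ofReal = p.1⁻¹ * p.2 * p.1)
    (hspecb : ∀ (μ : ℂ) (v : Fin (2 * N) → ℂ), v ≠ 0 →
      ((T₂ * T₁).map Complex.ofReal) *ᵥ v = μ • v → μ.re = 0)
    (hspecf : ∀ (μ : ℂ) (v : Fin (2 * N) → ℂ), v ≠ 0 →
      ((T₁ * T₂).map Complex.ofReal) *ᵥ v = μ • v → μ.re = 0) :
    let Kb := (T₂ * T₁).map Complex.ofReal
    let Kf := (T₁ * T₂).map Complex.ofReal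
    let T1c := T₁.map Complex.ofReal
    let T2c := T₂.map Complex.ofReal
    let sqAbs : ℂ → ℂ := fun z => (Real.sqrt ‖z‖ : ℂ)
    let cAbs : ℂ → ℂ := fun z => (‖z‖ : ℂ)
    let L₁ := matFun sqAbs (Kf⁻¹) * T1c
    let L₂ := matFun sqAbs (Kb⁻¹) * T2c
    L₁ = T1c * matFun sqAbs (Kb⁻¹) ∧
    L₂ = T2c * matFun sqAbs (Kf⁻¹) ∧
    L₁ * L₂ = matFun cAbs (Kf⁻¹) * Kf ∧
    L₂ * L₁ = matFun cAbs (Kb⁻¹) * Kb := by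
  intro Kb Kf T1c T2c sqAbs cAbs L₁ L₂
  -- basic unit facts over ℂ
  have hKb : IsUnit Kb := by
    have := hKbinv.map (Complex.ofRealHom.mapMatrix :
      Matrix (Fin (2 * N)) (Fin (2 * N)) ℝ →+* Matrix (Fin (2 * N)) (Fin (2 * N)) ℂ)
    rw [RingHom.mapMatrix_apply] at this
    exact this
  have hKf : IsUnit Kf := by
    have := hKfinv.map (Complex.ofRealHom.mapMatrix :
      Matrix (Fin (2 * N)) (Fin (2 * N)) ℝ →+* Matrix (Fin (2 * N)) (Fin (2 * N)) ℂ)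
    rw [RingHom.mapMatrix_apply] at this
    exact this
  have hKbd : IsUnit Kb.det := (isUnit_iff_isUnit_det _).mp hKb
  have hKfd : IsUnit Kf.det := (isUnit_iff_isUnit_det _).mp hKf
  have hKbm : Kb = T2c * T1c := Matrix.map_mul (f := Complex.ofRealHom)
  have hKfm : Kf = T1c * T2c := Matrix.map_mul (f := Complex.ofRealHom)
  have hcb : T1c * Kb = Kf * T1c := by rw [hKbm, hKfm, ← mul_assoc]
  have hcf : T2c * Kf = Kb * T2c := by rw [hKbm, hKfm, ← mul_assoc]
  have hinv1 : T1c * Kb⁻¹ = Kf⁻¹ * T1c := by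
    have h1 : Kf * (T1c * Kb⁻¹) = T1c := by
      rw [← mul_assoc, ← hcb, mul_assoc, mul_nonsing_inv _ hKbd, mul_one]
    calc T1c * Kb⁻¹ = Kf⁻¹ * (Kf * (T1c * Kb⁻¹)) := by
          rw [← mul_assoc, nonsing_inv_mul _ hKfd, one_mul]
      _ = Kf⁻¹ * T1c := by rw [h1]
  have hinv2 : T2c * Kf⁻¹ = Kb⁻¹ * T2c := by
    have h1 : Kb * (T2c * Kf⁻¹) = T2c := by
      rw [← mul_assoc, ← hcf, mul_assoc, mul_nonsing_inv _ hKfd, mul_one]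
    calc T2c * Kf⁻¹ = Kb⁻¹ * (Kb * (T2c * Kf⁻¹)) := by
          rw [← mul_assoc, nonsing_inv_mul _ hKbd, one_mul]
      _ = Kb⁻¹ * T2c := by rw [h1]
  -- diagonalizations of the inverses
  have hdbinv : ∃ p : Matrix (Fin (2 * N)) (Fin (2 * N)) ℂ × Matrix (Fin (2 * N)) (Fin (2 * N)) ℂ,
      IsUnit p.1 ∧ p.2.IsDiag ∧ Kb⁻¹ = p.1⁻¹ * p.2 * p.1 := by
    obtain ⟨⟨U, D⟩, hU, hD, hM⟩ := hdb
    have hUd : IsUnit U.det := (isUnit_iff_isUnit_det _).mp hU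
    refine ⟨⟨U, D⁻¹⟩, hU, ?_, ?_⟩
    · show (D⁻¹).IsDiag
      have hD' : Matrix.diagonal (fun i => D i i) = D := hD.diagonal_diag
      rw [← hD', inv_diagonal]
      exact isDiag_diagonal _
    · show Kb⁻¹ = U⁻¹ * D⁻¹ * U
      have : Kb = U⁻¹ * D * U := hM
      rw [this, Matrix.mul_inv_rev, Matrix.mul_inv_rev,
        nonsing_inv_nonsing_inv U hUd, ← mul_assoc]
  have hdfinv : ∃ p : Matrix (Fin (2 * N)) (Fin (2 * N)) ℂ × Matrix (Fin (2 * N)) (Fin (2 * N)) ℂ,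
      IsUnit p.1 ∧ p.2.IsDiag ∧ Kf⁻¹ = p.1⁻¹ * p.2 * p.1 := by
    obtain ⟨⟨U, D⟩, hU, hD, hM⟩ := hdf
    have hUd : IsUnit U.det := (isUnit_iff_isUnit_det _).mp hU
    refine ⟨⟨U, D⁻¹⟩, hU, ?_, ?_⟩
    · show (D⁻¹).IsDiag
      have hD' : Matrix.diagonal (fun i => D i i) = D := hD.diagonal_diag
      rw [← hD', inv_diagonal]
      exact isDiag_diagonal _
    · show Kf⁻¹ = U⁻¹ * D⁻¹ * U
      have : Kf = U⁻¹ * D * U := hM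
      rw [this, Matrix.mul_inv_rev, Matrix.mul_inv_rev,
        nonsing_inv_nonsing_inv U hUd, ← mul_assoc]
  -- explicit diagonalizations
  obtain ⟨⟨Ub, Db⟩, hUb, hDb, hMb⟩ := id hdbinv
  obtain ⟨⟨Uf, Df⟩, hUf, hDf, hMf⟩ := id hdfinv
  set db : Fin (2 * N) → ℂ := fun i => Db i i with hdbdef
  set df : Fin (2 * N) → ℂ := fun i => Df i i with hdfdef
  have hMb' : Kb⁻¹ = Ub⁻¹ * Matrix.diagonal db * Ub := by
    rw [hMb]; congr 2; exact hDb.diagonal_diag.symm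
  have hMf' : Kf⁻¹ = Uf⁻¹ * Matrix.diagonal df * Uf := by
    rw [hMf]; congr 2; exact hDf.diagonal_diag.symm
  -- interpolation polynomial
  set s : Finset ℂ := Finset.univ.image db ∪ Finset.univ.image df with hsdef
  set P : ℂ[X] := Lagrange.interpolate s id sqAbs with hPdef
  have hP : ∀ x ∈ s, P.eval x = sqAbs x := by
    intro x hx
    exact Lagrange.eval_interpolate_at_node sqAbs (Set.injOn_id _) hx
  have hmemb : ∀ (μ : ℂ) (v : Fin (2 * N) → ℂ), v ≠ 0 → Kb⁻¹ *ᵥ v = μ • v → μ ∈ s := by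
    intro μ v hv hev
    obtain ⟨i, hi⟩ := eig_mem_diag hUb db hMb' hv hev
    exact Finset.mem_union_left _ (Finset.mem_image.mpr ⟨i, Finset.mem_univ i, hi⟩)
  have hmemf : ∀ (μ : ℂ) (v : Fin (2 * N) → ℂ), v ≠ 0 → Kf⁻¹ *ᵥ v = μ • v → μ ∈ s := by
    intro μ v hv hev
    obtain ⟨i, hi⟩ := eig_mem_diag hUf df hMf' hv hev
    exact Finset.mem_union_right _ (Finset.mem_image.mpr ⟨i, Finset.mem_univ i, hi⟩)
  -- matFun as polynomial evaluation
  have hsb : matFun sqAbs (Kb⁻¹) = aeval (Kb⁻¹) P :=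
    matFun_eq_aeval sqAbs _ hdbinv P (fun μ v hv hev => hP μ (hmemb μ v hv hev))
  have hsf : matFun sqAbs (Kf⁻¹) = aeval (Kf⁻¹) P :=
    matFun_eq_aeval sqAbs _ hdfinv P (fun μ v hv hev => hP μ (hmemf μ v hv hev))
  have hsq : ∀ μ : ℂ, μ ∈ s → (P * P).eval μ = cAbs μ := by
    intro μ hμ
    rw [Polynomial.eval_mul, hP μ hμ]
    show sqAbs μ * sqAbs μ = cAbs μ
    show ((Real.sqrt ‖μ‖ : ℝ) : ℂ) * ((Real.sqrt ‖μ‖ : ℝ) : ℂ)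
      = ((‖μ‖ : ℝ) : ℂ)
    rw [← Complex.ofReal_mul, Real.mul_self_sqrt (norm_nonneg μ)]
  have hcb2 : matFun cAbs (Kb⁻¹) = aeval (Kb⁻¹) (P * P) :=
    matFun_eq_aeval cAbs _ hdbinv (P * P) (fun μ v hv hev => hsq μ (hmemb μ v hv hev))
  have hcf2 : matFun cAbs (Kf⁻¹) = aeval (Kf⁻¹) (P * P) :=
    matFun_eq_aeval cAbs _ hdfinv (P * P) (fun μ v hv hev => hsq μ (hmemf μ v hv hev))
  -- intertwining of polynomial functions
  have key1 : T1c * aeval (Kb⁻¹) P = aeval (Kf⁻¹) P * T1c := comm_aeval _ _ _ hinv1 P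
  have key2 : T2c * aeval (Kf⁻¹) P = aeval (Kb⁻¹) P * T2c := comm_aeval _ _ _ hinv2 P
  refine ⟨?_, ?_, ?_, ?_⟩
  · show matFun sqAbs (Kf⁻¹) * T1c = T1c * matFun sqAbs (Kb⁻¹)
    rw [hsf, hsb, key1]
  · show matFun sqAbs (Kb⁻¹) * T2c = T2c * matFun sqAbs (Kf⁻¹)
    rw [hsb, hsf, key2]
  · show (matFun sqAbs (Kf⁻¹) * T1c) * (matFun sqAbs (Kb⁻¹) * T2c) = matFun cAbs (Kf⁻¹) * Kf
    rw [hsf, hsb, hcf2, _root_.map_mul]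
    simp only [mul_assoc]
    rw [← mul_assoc T1c, key1, mul_assoc, hKfm]
  · show (matFun sqAbs (Kb⁻¹) * T2c) * (matFun sqAbs (Kf⁻¹) * T1c) = matFun cAbs (Kb⁻¹) * Kb
    rw [hsb, hsf, hcb2, _root_.map_mul]
    simp only [mul_assoc]
    rw [← mul_assoc T2c, key2, mul_assoc, hKbm]
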